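/- Let W and H be real Hilbert spaces and ι : W → H an injective continuous linear map. Let A : ℝ → L(W,H) be a family of continuous linear maps that is differentiable at t₀ in operator norm, such that each A_t is symmetric relative to ι, i.e., ⟨A_t x, ι y⟩_H = ⟨ι x, A_t y⟩_H for all x, y ∈ W. Let σ : ℝ → L(ℝᵐ,W) and π : ℝ → L(H,ℝᵐ) be families differentiable at t₀ such that for all t: π_t ∘ ι ∘ σ_t = id on ℝᵐ, and ⟨π_t h, e⟩ = ⟨h, ι(σ_t e)⟩_H for all h ∈ H and e ∈ ℝᵐ. Set B_t := π_t ∘ A_t ∘ σ_t : ℝᵐ → ℝᵐ. Then for every δ ∈ ℝ and every u ∈ ℝᵐ satisfying A_{t₀}(σ_{t₀} u) = δ·ι(σ_{t₀} u), one has ⟨Ḃ_{t₀} u, u⟩ = ⟨Ȧ_{t₀}(σ_{t₀} u), ι(σ_{t₀} u)⟩_H, where Ḃ_{t₀} and Ȧ_{t₀} denote the derivatives of the families B and A at t₀. -/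

import Mathlib

open scoped RealInnerProductSpace

/-- Let `ι : W → H` be an injective continuous linear map between real
Hilbert spaces, `A : ℝ → L(W,H)` differentiable at `t₀` with derivative `A'`, each `A t`
symmetric relative to `ι`. Let `σ : ℝ → L(ℝᵐ,W)`, `π : ℝ → L(H,ℝᵐ)` be differentiable at `t₀`
with `π t ∘ ι ∘ σ t = id` and `⟪π t h, e⟫ = ⟪h, ι (σ t e)⟫`. If `B t = π t ∘ A t ∘ σ t` has
derivative `B'` at `t₀`, then for all `δ ∈ ℝ` and `u` with `A t₀ (σ t₀ u) = δ • ι (σ t₀ u)`,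
we have `⟪B' u, u⟫ = ⟪A' (σ t₀ u), ι (σ t₀ u)⟫`. -/
theorem stmt3 {W H : Type*}
    [NormedAddCommGroup W] [InnerProductSpace ℝ W] [CompleteSpace W]
    [NormedAddCommGroup H] [InnerProductSpace ℝ H] [CompleteSpace H]
    (ι : W →L[ℝ] H) (hι : Function.Injective ι) (m : ℕ) (t₀ : ℝ)
    (A : ℝ → W →L[ℝ] H) (A' : W →L[ℝ] H) (hA : HasDerivAt A A' t₀)
    (hAsymm : ∀ t (x y : W), ⟪A t x, ι y⟫ = ⟪ι x, A t y⟫)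
    (σ : ℝ → EuclideanSpace ℝ (Fin m) →L[ℝ] W)
    (σ' : EuclideanSpace ℝ (Fin m) →L[ℝ] W) (hσ : HasDerivAt σ σ' t₀)
    (π : ℝ → H →L[ℝ] EuclideanSpace ℝ (Fin m))
    (π' : H →L[ℝ] EuclideanSpace ℝ (Fin m)) (hπ : HasDerivAt π π' t₀)
    (hπισ : ∀ t e, π t (ι (σ t e)) = e)
    (hπadj : ∀ t (h : H) e, ⟪π t h, e⟫ = ⟪h, ι (σ t e)⟫)
    (B' : EuclideanSpace ℝ (Fin m) →L[ℝ] EuclideanSpace ℝ (Fin m))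
    (hB : HasDerivAt (fun t => (π t).comp ((A t).comp (σ t))) B' t₀) :
    ∀ (δ : ℝ) (u : EuclideanSpace ℝ (Fin m)),
      A t₀ (σ t₀ u) = δ • ι (σ t₀ u) →
      ⟪B' u, u⟫ = ⟪A' (σ t₀ u), ι (σ t₀ u)⟫ := by
  intro δ u hu
  -- Product rule : derivative of `t ↦ π t ∘ A t ∘ σ t`
  have hB2 : HasDerivAt (fun t => (π t).comp ((A t).comp (σ t)))
      (π'.comp ((A t₀).comp (σ t₀)) +
        (π t₀).comp (A'.comp (σ t₀) + (A t₀).comp σ')) t₀ :=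
    hπ.clm_comp (hA.clm_comp hσ)
  have hBeq : B' = π'.comp ((A t₀).comp (σ t₀)) +
      (π t₀).comp (A'.comp (σ t₀) + (A t₀).comp σ') := hB.unique hB2
  -- Differentiating `π t (ι (σ t u)) = u` gives the key cancellation
  have hconst : HasDerivAt (fun t => π t (ι (σ t u)))
      (π' (ι (σ t₀ u)) + π t₀ (ι (σ' u))) t₀ := by
    have hσu : HasDerivAt (fun t => ι (σ t u)) (ι (σ' u)) t₀ := by
      have h1 : HasDerivAt (fun t => σ t u) (σ' u + σ t₀ 0) t₀ :=
        hσ.clm_apply (hasDerivAt_const t₀ u)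
      have h2 := ι.hasFDerivAt.comp_hasDerivAt t₀ h1
      simpa [Function.comp_def] using h2
    have := hπ.clm_apply hσu
    simpa using this
  have hkey : π' (ι (σ t₀ u)) + π t₀ (ι (σ' u)) = 0 := by
    have h0 : HasDerivAt (fun _ : ℝ => u) (0 : EuclideanSpace ℝ (Fin m)) t₀ :=
      hasDerivAt_const t₀ u
    have : HasDerivAt (fun t => π t (ι (σ t u))) (0 : EuclideanSpace ℝ (Fin m)) t₀ := by
      simpa [hπισ] using h0
    exact hconst.unique this
  have hB'u : B' u = π' (A t₀ (σ t₀ u)) + (π t₀ (A' (σ t₀ u)) + π t₀ (A t₀ (σ' u))) := by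
    rw [hBeq]; simp [ContinuousLinearMap.comp_apply]
  have e1 : ⟪π' (A t₀ (σ t₀ u)), u⟫ = δ * ⟪π' (ι (σ t₀ u)), u⟫ := by
    rw [hu, map_smul, real_inner_smul_left]
  have e2 : ⟪π' (ι (σ t₀ u)), u⟫ = - ⟪ι (σ' u), ι (σ t₀ u)⟫ := by
    have h3 : π' (ι (σ t₀ u)) = - π t₀ (ι (σ' u)) := by
      have := hkey; linear_combination (norm := abel) this
    rw [h3, inner_neg_left, hπadj]
  have e3 : ⟪π t₀ (A t₀ (σ' u)), u⟫ = δ * ⟪ι (σ' u), ι (σ t₀ u)⟫ := by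
    rw [hπadj, hAsymm, hu]
    simp [real_inner_smul_right, real_inner_comm]
  have e4 : ⟪π t₀ (A' (σ t₀ u)), u⟫ = ⟪A' (σ t₀ u), ι (σ t₀ u)⟫ := hπadj _ _ _
  rw [hB'u, inner_add_left, inner_add_left, e1, e2, e3, e4]
  ring
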